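/- Suppose the operators A_n = 𝒜(x,n) and B_n = 𝒜(y,n) satisfy ‖A_n − B_n‖ ≤ aⁿ d(x,y)^ν for all n ≥ 0, and on a regular set Λ_ℓ the cocycle satisfies, for closed subspaces E⁻(x) ⊕ E⁺(x) = B: ‖𝒜(x,n)u‖ ≤ ℓe^{(λ₂+ε)n}‖u‖ for u ∈ E⁻(x), ‖𝒜(x,n)v‖ ≥ ℓ⁻¹e^{(λ₁−ε)n}‖v‖ for v ∈ E⁺(x), and max{‖u‖,‖v‖} ≤ ℓ‖u+v‖, where λ₂ + ε < λ₁ − ε and a > e^{λ₁−ε}. Then for all x, y ∈ Λ_ℓ with d(x,y) < 1: d̂(E⁻(x), E⁻(y)) ≤ (4+2ℓ)ℓ² e^{λ₁−λ₂−2ε} d(x,y)^{ν(λ₁−λ₂−2ε)/(log a − λ₂ − ε)}. -/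

import Mathlib

open Metric Real

variable {B : Type*} [NormedAddCommGroup B] [NormedSpace ℝ B]

/-- The unit sphere of a subspace. -/
def unitSph (E : Submodule ℝ B) : Set B := {v : B | v ∈ E ∧ ‖v‖ = 1}

/-- `dist(E,F) = sup_{v ∈ S_E} dist(v, S_F)`. -/
noncomputable def distSphOne (E F : Submodule ℝ B) : ℝ :=
  sSup {r : ℝ | ∃ v ∈ unitSph E, r = infDist v (unitSph F)}

/-- The Hausdorff distance between unit spheres `d̂(E,F)`. -/
noncomputable def distSphHat (E F : Submodule ℝ B) : ℝ :=
  max (distSphOne E F) (distSphOne F E)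

set_option maxHeartbeats 1000000 in
theorem holder_slow_space_aux
    {X : Type*} [MetricSpace X]
    (Λℓ : Set X) (Eminus Eplus : X → Submodule ℝ B)
    (hcompl : ∀ x ∈ Λℓ, IsCompl (Eminus x) (Eplus x))
    (𝒜 : X → ℕ → (B →L[ℝ] B))
    (lam₁ lam₂ ε ℓ a ν : ℝ)
    (hε : 0 < ε) (hℓ : 1 ≤ ℓ) (hν : 0 < ν)
    (hgap : lam₂ + ε < lam₁ - ε) (ha : exp (lam₁ - ε) < a)
    (hAB : ∀ x y : X, ∀ n : ℕ, ‖𝒜 x n - 𝒜 y n‖ ≤ a ^ n * dist x y ^ ν)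
    (hminus : ∀ x ∈ Λℓ, ∀ u ∈ Eminus x, ∀ n : ℕ,
      ‖𝒜 x n u‖ ≤ ℓ * exp ((lam₂ + ε) * n) * ‖u‖)
    (hplus : ∀ x ∈ Λℓ, ∀ v ∈ Eplus x, ∀ n : ℕ,
      ℓ⁻¹ * exp ((lam₁ - ε) * n) * ‖v‖ ≤ ‖𝒜 x n v‖)
    (hdom : ∀ x ∈ Λℓ, ∀ u ∈ Eminus x, ∀ v ∈ Eplus x, max ‖u‖ ‖v‖ ≤ ℓ * ‖u + v‖) :
    ∀ x ∈ Λℓ, ∀ y ∈ Λℓ, dist x y < 1 →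
      distSphOne (Eminus x) (Eminus y) ≤
        (4 + 2 * ℓ) * ℓ ^ 2 * exp (lam₁ - lam₂ - 2 * ε) *
          dist x y ^ (ν * (lam₁ - lam₂ - 2 * ε) / (Real.log a - lam₂ - ε)) := by
  intro x hx y hy hxy
  have ha0 : 0 < a := (exp_pos _).trans ha
  have hL : lam₁ - ε < Real.log a := (Real.lt_log_iff_exp_lt ha0).2 ha
  have hl0 : (0:ℝ) < ℓ := lt_of_lt_of_le one_pos hℓ
  set L := Real.log a with hLdef
  set Δ := lam₁ - lam₂ - 2*ε with hΔdef
  set D := L - lam₂ - ε with hDdef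
  have hΔ : 0 < Δ := by rw [hΔdef]; linarith
  have hD : 0 < D := by rw [hDdef]; linarith
  set θ := ν * Δ / D with hθdef
  have hθ : 0 < θ := div_pos (mul_pos hν hΔ) hD
  have hRHS : (4 + 2 * ℓ) * ℓ ^ 2 * exp Δ * dist x y ^ θ =
      (4 + 2 * ℓ) * ℓ ^ 2 * exp (lam₁ - lam₂ - 2 * ε) *
        dist x y ^ (ν * (lam₁ - lam₂ - 2 * ε) / (Real.log a - lam₂ - ε)) := rfl
  rw [← hRHS]
  have hC0 : (0:ℝ) ≤ (4 + 2 * ℓ) * ℓ ^ 2 * exp Δ * dist x y ^ θ := by positivity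
  rcases eq_or_lt_of_le (dist_nonneg (x := x) (y := y)) with h0 | hd0
  · -- dist x y = 0, so x = y
    have hxy' : x = y := eq_of_dist_eq_zero h0.symm
    subst hxy'
    apply Real.sSup_le _ hC0
    rintro r ⟨w, hw, rfl⟩
    rw [Metric.infDist_zero_of_mem hw]
    exact hC0
  · set d := dist x y with hddef
    have hlogd : Real.log d < 0 := Real.log_neg hd0 hxy
    set t := ν * (-Real.log d) / D with htdef
    have ht0 : 0 ≤ t := by
      rw [htdef]
      exact div_nonneg (mul_nonneg hν.le (by linarith)) hD.le
    set n := ⌊t⌋₊ with hndef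
    have hn1 : (n:ℝ) ≤ t := Nat.floor_le ht0
    have hn2 : t - 1 ≤ (n:ℝ) := by
      have := Nat.lt_floor_add_one t; linarith
    have hdθ : d ^ θ = exp (θ * Real.log d) := by
      rw [Real.rpow_def_of_pos hd0, mul_comm]
    have hdθ0 : 0 ≤ d ^ θ := Real.rpow_nonneg hd0.le θ
    have hθlog : θ * Real.log d = -(Δ * t) := by
      rw [hθdef, htdef]
      field_simp
    have e1 : exp (-(Δ) * n) ≤ exp Δ * d ^ θ := by
      rw [hdθ, ← Real.exp_add]
      apply Real.exp_le_exp.2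
      rw [hθlog]
      nlinarith [mul_le_mul_of_nonneg_left hn2 hΔ.le]
    have e2 : exp ((L - lam₁ + ε) * n) * d ^ ν ≤ d ^ θ := by
      rw [hdθ, Real.rpow_def_of_pos hd0 ν, ← Real.exp_add]
      apply Real.exp_le_exp.2
      have hkey : (L - lam₁ + ε) * t + Real.log d * ν = θ * Real.log d := by
        rw [hθdef, htdef, hΔdef]
        field_simp
        ring
      have hmono : (L - lam₁ + ε) * n ≤ (L - lam₁ + ε) * t :=
        mul_le_mul_of_nonneg_left hn1 (by linarith)
      linarith
    -- main estimate
    apply Real.sSup_le _ hC0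
    rintro r ⟨w, ⟨hwE, hwn⟩, rfl⟩
    obtain ⟨u, v, huv, -⟩ := Submodule.existsUnique_add_of_isCompl (hcompl y hy) w
    have hu_le : ‖(u:B)‖ ≤ ℓ := by
      have h := hdom y hy u u.2 v v.2
      rw [huv, hwn, mul_one] at h
      exact le_trans (le_max_left _ _) h
    have hwu : (v:B) = w - u := by rw [← huv]; abel
    have h1 : ‖𝒜 x n w‖ ≤ ℓ * exp ((lam₂ + ε) * n) := by
      have := hminus x hx w hwE n
      rwa [hwn, mul_one] at this
    have h2 : ‖𝒜 y n w - 𝒜 x n w‖ ≤ a ^ n * d ^ ν := by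
      calc ‖𝒜 y n w - 𝒜 x n w‖ = ‖(𝒜 y n - 𝒜 x n) w‖ := by
            rw [ContinuousLinearMap.sub_apply]
        _ ≤ ‖𝒜 y n - 𝒜 x n‖ * ‖w‖ := ContinuousLinearMap.le_opNorm _ _
        _ = ‖𝒜 y n - 𝒜 x n‖ := by rw [hwn, mul_one]
        _ ≤ a ^ n * dist y x ^ ν := hAB y x n
        _ = a ^ n * d ^ ν := by rw [dist_comm]
    have h3 : ‖𝒜 y n u‖ ≤ ℓ * exp ((lam₂ + ε) * n) * ℓ := by
      calc ‖𝒜 y n u‖ ≤ ℓ * exp ((lam₂ + ε) * n) * ‖(u:B)‖ := hminus y hy u u.2 n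
        _ ≤ ℓ * exp ((lam₂ + ε) * n) * ℓ := by
            apply mul_le_mul_of_nonneg_left hu_le
            positivity
    have h4 : ℓ⁻¹ * exp ((lam₁ - ε) * n) * ‖(v:B)‖ ≤ ‖𝒜 y n v‖ := hplus y hy v v.2 n
    have h5 : ‖𝒜 y n v‖ ≤ ‖𝒜 y n w‖ + ‖𝒜 y n u‖ := by
      have : (𝒜 y n) (v:B) = 𝒜 y n w - 𝒜 y n u := by rw [hwu, map_sub]
      rw [this]
      exact norm_sub_le _ _
    have h6 : ‖𝒜 y n w‖ ≤ ‖𝒜 x n w‖ + a ^ n * d ^ ν := by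
      have : ‖𝒜 y n w‖ ≤ ‖𝒜 x n w‖ + ‖𝒜 y n w - 𝒜 x n w‖ := by
        have := norm_add_le (𝒜 x n w) (𝒜 y n w - 𝒜 x n w)
        simpa using this
      linarith
    have han : a ^ n = exp (L * n) := by
      rw [mul_comm, Real.exp_nat_mul, hLdef, Real.exp_log ha0]
    have hE : (0:ℝ) < exp ((lam₁ - ε) * n) := exp_pos _
    have h7 : ‖(v:B)‖ * exp ((lam₁ - ε) * n) ≤
        ℓ * ((ℓ + ℓ^2) * exp ((lam₂ + ε) * n) + exp (L * n) * d ^ ν) := by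
      have hring : ℓ * exp ((lam₂ + ε) * n) + ℓ * exp ((lam₂ + ε) * n) * ℓ
          = (ℓ + ℓ^2) * exp ((lam₂ + ε) * n) := by ring
      have h8 : ℓ⁻¹ * exp ((lam₁ - ε) * n) * ‖(v:B)‖ ≤
          (ℓ + ℓ^2) * exp ((lam₂ + ε) * n) + a ^ n * d ^ ν := by linarith
      have h9 := mul_le_mul_of_nonneg_left h8 hl0.le
      have h10 : ℓ * (ℓ⁻¹ * exp ((lam₁ - ε) * n) * ‖(v:B)‖)
          = ‖(v:B)‖ * exp ((lam₁ - ε) * n) := by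
        field_simp
      rw [h10, han] at h9
      exact h9
    have ee1 : exp (-(Δ) * n) * exp ((lam₁ - ε) * n) = exp ((lam₂ + ε) * n) := by
      rw [← Real.exp_add]; congr 1; rw [hΔdef]; ring
    have ee2 : exp ((L - lam₁ + ε) * n) * exp ((lam₁ - ε) * n) = exp (L * n) := by
      rw [← Real.exp_add]; congr 1; ring
    have hkey : ‖(v:B)‖ ≤ (ℓ^2 + ℓ^3) * exp (-(Δ) * n)
        + ℓ * (exp ((L - lam₁ + ε) * n) * d ^ ν) := by
      have heq : ((ℓ^2 + ℓ^3) * exp (-(Δ) * n)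
          + ℓ * (exp ((L - lam₁ + ε) * n) * d ^ ν)) * exp ((lam₁ - ε) * n)
          = ℓ * ((ℓ + ℓ^2) * exp ((lam₂ + ε) * n) + exp (L * n) * d ^ ν) := by
        linear_combination (ℓ^2 + ℓ^3) * ee1 + ℓ * d ^ ν * ee2
      have := h7.trans_eq heq.symm
      exact le_of_mul_le_mul_right this hE
    have hexpΔ : (1:ℝ) ≤ exp Δ := by
      rw [← Real.exp_zero]
      exact exp_le_exp.2 hΔ.le
    have hvfin : ‖(v:B)‖ ≤ (ℓ + ℓ^2 + ℓ^3) * exp Δ * d ^ θ := by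
      have t1 : (ℓ^2 + ℓ^3) * exp (-(Δ) * n) ≤ (ℓ^2 + ℓ^3) * (exp Δ * d ^ θ) :=
        mul_le_mul_of_nonneg_left e1 (by positivity)
      have t2 : ℓ * (exp ((L - lam₁ + ε) * n) * d ^ ν) ≤ ℓ * d ^ θ :=
        mul_le_mul_of_nonneg_left e2 hl0.le
      have t3 : ℓ * d ^ θ ≤ ℓ * (exp Δ * d ^ θ) :=
        mul_le_mul_of_nonneg_left (le_mul_of_one_le_left hdθ0 hexpΔ) hl0.le
      have t4 : (ℓ^2 + ℓ^3) * (exp Δ * d ^ θ) + ℓ * (exp Δ * d ^ θ)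
          = (ℓ + ℓ^2 + ℓ^3) * exp Δ * d ^ θ := by ring
      linarith
    have hfinal : infDist w (unitSph (Eminus y)) ≤ 2 * ((ℓ + ℓ^2 + ℓ^3) * exp Δ * d ^ θ) := by
      by_cases hv1 : ‖(v:B)‖ < 1
      · have hu_pos : 0 < ‖(u:B)‖ := by
          have := norm_sub_norm_le w (v:B)
          have hwv : w - (v:B) = u := by rw [hwu]; abel
          rw [hwv, hwn] at this
          linarith
        set s : B := ‖(u:B)‖⁻¹ • (u:B) with hsdef
        have hs : s ∈ unitSph (Eminus y) := by
          constructor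
          · exact Submodule.smul_mem _ _ u.2
          · rw [hsdef, norm_smul, norm_inv, norm_norm,
              inv_mul_cancel₀ hu_pos.ne']
        have hid : infDist w (unitSph (Eminus y)) ≤ dist w s :=
          infDist_le_dist_of_mem hs
        have hds : dist w s ≤ 2 * ‖(v:B)‖ := by
          have hus : ‖(u:B) - s‖ = |‖(u:B)‖ - 1| := by
            rw [hsdef]
            have : (u:B) - ‖(u:B)‖⁻¹ • (u:B) = (1 - ‖(u:B)‖⁻¹) • (u:B) := by
              rw [sub_smul, one_smul]
            rw [this, norm_smul, Real.norm_eq_abs, ← abs_of_pos hu_pos,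
              ← abs_mul]
            congr 1
            field_simp
            rw [abs_of_pos hu_pos]
            ring
          have habs : |‖(u:B)‖ - 1| ≤ ‖(v:B)‖ := by
            have := abs_norm_sub_norm_le (u:B) w
            rw [hwn] at this
            have hXX : (u:B) - w = -(v:B) := by rw [hwu]; abel
            rw [hXX, norm_neg] at this
            exact this
          calc dist w s = ‖w - s‖ := dist_eq_norm _ _
            _ ≤ ‖w - (u:B)‖ + ‖(u:B) - s‖ := by
                have := norm_sub_le_norm_sub_add_norm_sub w (u:B) s
                exact this
            _ ≤ ‖(v:B)‖ + ‖(v:B)‖ := by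
                have hwv : w - (u:B) = v := by rw [hwu]
                rw [hwv, hus]
                linarith
            _ = 2 * ‖(v:B)‖ := by ring
        calc infDist w (unitSph (Eminus y)) ≤ dist w s := hid
          _ ≤ 2 * ‖(v:B)‖ := hds
          _ ≤ 2 * ((ℓ + ℓ^2 + ℓ^3) * exp Δ * d ^ θ) := by linarith
      · push_neg at hv1
        have hbig : (2:ℝ) ≤ 2 * ((ℓ + ℓ^2 + ℓ^3) * exp Δ * d ^ θ) := by
          have : (1:ℝ) ≤ (ℓ + ℓ^2 + ℓ^3) * exp Δ * d ^ θ := le_trans hv1 hvfin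
          linarith
        rcases (unitSph (Eminus y)).eq_empty_or_nonempty with he | ⟨s, hs⟩
        · rw [he, Metric.infDist_empty]
          linarith
        · have : infDist w (unitSph (Eminus y)) ≤ dist w s :=
            infDist_le_dist_of_mem hs
          have hds : dist w s ≤ 2 := by
            calc dist w s = ‖w - s‖ := dist_eq_norm _ _
              _ ≤ ‖w‖ + ‖s‖ := norm_sub_le _ _
              _ = 2 := by rw [hwn, hs.2]; norm_num
          linarith
    calc infDist w (unitSph (Eminus y)) ≤ 2 * ((ℓ + ℓ^2 + ℓ^3) * exp Δ * d ^ θ) := hfinal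
      _ = 2 * (ℓ + ℓ^2 + ℓ^3) * exp Δ * d ^ θ := by ring
      _ ≤ (4 + 2 * ℓ) * ℓ ^ 2 * exp Δ * d ^ θ := by
          have hc : 2 * (ℓ + ℓ^2 + ℓ^3) ≤ (4 + 2 * ℓ) * ℓ ^ 2 := by
            nlinarith [sq_nonneg (ℓ - 1)]
          exact mul_le_mul_of_nonneg_right
            (mul_le_mul_of_nonneg_right hc (exp_pos Δ).le) hdθ0

/-- Hölder continuity of the slow Oseledets subspace `E⁻` over a regular set: if the
cocycle is Hölder (`‖𝒜(x,n) − 𝒜(y,n)‖ ≤ aⁿ d(x,y)^ν`) and admits a uniformly dominated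
splitting `B = E⁻(x) ⊕ E⁺(x)` on `Λ_ℓ`, then for `x, y ∈ Λ_ℓ` with `d(x,y) < 1`,
`d̂(E⁻(x),E⁻(y)) ≤ (4+2ℓ)ℓ² e^{lam₁−lam₂−2ε} d(x,y)^{ν(lam₁−lam₂−2ε)/(log a − lam₂ − ε)}`. -/
theorem holder_slow_space [CompleteSpace B]
    {X : Type*} [MetricSpace X]
    (Λℓ : Set X) (Eminus Eplus : X → Submodule ℝ B)
    (hclosed : ∀ x ∈ Λℓ, IsClosed ((Eminus x : Set B)) ∧ IsClosed ((Eplus x : Set B)))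
    (hcompl : ∀ x ∈ Λℓ, IsCompl (Eminus x) (Eplus x))
    (𝒜 : X → ℕ → (B →L[ℝ] B))
    (lam₁ lam₂ ε ℓ a ν : ℝ)
    (hε : 0 < ε) (hℓ : 1 ≤ ℓ) (hν : 0 < ν) (hν1 : ν ≤ 1)
    (hgap : lam₂ + ε < lam₁ - ε) (ha : exp (lam₁ - ε) < a)
    (hAB : ∀ x y : X, ∀ n : ℕ, ‖𝒜 x n - 𝒜 y n‖ ≤ a ^ n * dist x y ^ ν)
    (hminus : ∀ x ∈ Λℓ, ∀ u ∈ Eminus x, ∀ n : ℕ,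
      ‖𝒜 x n u‖ ≤ ℓ * exp ((lam₂ + ε) * n) * ‖u‖)
    (hplus : ∀ x ∈ Λℓ, ∀ v ∈ Eplus x, ∀ n : ℕ,
      ℓ⁻¹ * exp ((lam₁ - ε) * n) * ‖v‖ ≤ ‖𝒜 x n v‖)
    (hdom : ∀ x ∈ Λℓ, ∀ u ∈ Eminus x, ∀ v ∈ Eplus x, max ‖u‖ ‖v‖ ≤ ℓ * ‖u + v‖) :
    ∀ x ∈ Λℓ, ∀ y ∈ Λℓ, dist x y < 1 →
      distSphHat (Eminus x) (Eminus y) ≤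
        (4 + 2 * ℓ) * ℓ ^ 2 * exp (lam₁ - lam₂ - 2 * ε) *
          dist x y ^ (ν * (lam₁ - lam₂ - 2 * ε) / (Real.log a - lam₂ - ε)) := by
  intro x hx y hy hxy
  have h1 := holder_slow_space_aux Λℓ Eminus Eplus hcompl 𝒜 lam₁ lam₂ ε ℓ a ν
    hε hℓ hν hgap ha hAB hminus hplus hdom x hx y hy hxy
  have h2 := holder_slow_space_aux Λℓ Eminus Eplus hcompl 𝒜 lam₁ lam₂ ε ℓ a ν
    hε hℓ hν hgap ha hAB hminus hplus hdom y hy x hx (by rwa [dist_comm])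
  rw [dist_comm y x] at h2
  exact max_le h1 h2
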